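/- Let X be a real Banach space, A : X → Set X an accretive operator with zer A ≠ ∅, and for each γ > 0 let J_γ : X → X be a resolvent function of A. Let α ∈ [0,1), f : X → X an α-contraction, x ∈ X, (α_n) a sequence in [0,1], (λ_n) a sequence in (0,∞), and (x_n) the VAM iteration x_0 = x, x_{n+1} = α_n • f(x_n) + (1 − α_n) • J_{λ_n}(x_n). Let z ∈ zer A and K*_z ∈ ℕ, K*_z ≥ 1, with K*_z ≥ max{‖x − z‖, ‖f(z) − z‖/(1 − α)}, and let Φ* be a rate of asymptotic regularity of (x_n). (1) If σ₃ is a rate of convergence of (α_n) towards 0, then Ψ*(k) = max{σ₃(4K*_z(k+1) − 1), Φ*(2k+1)} is a rate of (J_{λ_n})-asymptotic regularity of (x_n). (2) If moreover Λ ∈ ℕ, Λ ≥ 1, and N_Λ ∈ ℕ satisfy λ_n ≥ 1/Λ for all n ≥ N_Λ, and m ∈ ℕ, Λ_m ∈ ℕ with Λ_m ≥ 1 and Λ_m ≥ λ_m, then Θ*_m(k) = max{N_Λ, Ψ*(Λ_m·Λ·(k+1) − 1), Ψ*(2k+1)} is a rate of J_{λ_m}-asymptotic regularity of (x_n). -/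

import Mathlib

set_option maxHeartbeats 1000000


/-- Rates of `(J_{λ_n})`- and `J_{λ_m}`-asymptotic regularity of the VAM iteration. -/
theorem stmt_16 {X : Type*} [NormedAddCommGroup X] [NormedSpace ℝ X] [CompleteSpace X]
    (A : X → Set X)
    (hA : ∀ x y u v : X, u ∈ A x → v ∈ A y → ∀ γ : ℝ, 0 < γ →
      ‖x - y‖ ≤ ‖x - y + γ • (u - v)‖)
    (hzer : ∃ z : X, (0 : X) ∈ A z)
    (Jr : ℝ → X → X)
    (hJ : ∀ γ : ℝ, 0 < γ → ∀ x : X, γ⁻¹ • (x - Jr γ x) ∈ A (Jr γ x))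
    (α : ℝ) (hα0 : 0 ≤ α) (hα1 : α < 1)
    (f : X → X) (hf : ∀ x y : X, ‖f x - f y‖ ≤ α * ‖x - y‖)
    (x : X)
    (a : ℕ → ℝ) (ha : ∀ n, a n ∈ Set.Icc (0 : ℝ) 1)
    (lam : ℕ → ℝ) (hlam : ∀ n, 0 < lam n)
    (xs : ℕ → X) (hxs0 : xs 0 = x)
    (hxs : ∀ n : ℕ, xs (n + 1) = a n • f (xs n) + (1 - a n) • Jr (lam n) (xs n))
    (z : X) (hz : (0 : X) ∈ A z)
    (Kz : ℕ) (hKz1 : 1 ≤ Kz)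
    (hKz : max ‖x - z‖ (‖f z - z‖ / (1 - α)) ≤ (Kz : ℝ))
    -- Φ is a rate of asymptotic regularity of (xs n)
    (Φ : ℕ → ℕ) (hΦ : ∀ k : ℕ, ∀ n, Φ k ≤ n → ‖xs (n + 1) - xs n‖ ≤ 1 / (k + 1))
    -- σ₃ is a rate of convergence of (a n) towards 0
    (σ₃ : ℕ → ℕ) (hσ₃ : ∀ k : ℕ, ∀ n, σ₃ k ≤ n → a n ≤ 1 / (k + 1))
    (Ψ : ℕ → ℕ)
    (hΨdef : ∀ k : ℕ, Ψ k = max (σ₃ (4 * Kz * (k + 1) - 1)) (Φ (2 * k + 1))) :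
    -- (1) Ψ is a rate of (J_{λ_n})-asymptotic regularity of (xs n)
    (∀ k : ℕ, ∀ n, Ψ k ≤ n → ‖Jr (lam n) (xs n) - xs n‖ ≤ 1 / (k + 1)) ∧
    -- (2) Θ_m is a rate of J_{λ_m}-asymptotic regularity of (xs n)
    (∀ Λ : ℕ, 1 ≤ Λ → ∀ NΛ : ℕ, (∀ n : ℕ, NΛ ≤ n → 1 / (Λ : ℝ) ≤ lam n) →
      ∀ m Λm : ℕ, 1 ≤ Λm → lam m ≤ (Λm : ℝ) →
      ∀ Θ : ℕ → ℕ,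
        (∀ k : ℕ, Θ k = max (max NΛ (Ψ (Λm * Λ * (k + 1) - 1))) (Ψ (2 * k + 1))) →
        ∀ k : ℕ, ∀ n, Θ k ≤ n → ‖Jr (lam m) (xs n) - xs n‖ ≤ 1 / (k + 1)) := by
  have hα' : (0:ℝ) < 1 - α := by linarith
  have hKpos : (0:ℝ) < Kz := by exact_mod_cast hKz1
  -- z is a fixed point of every resolvent
  have hJz : ∀ γ : ℝ, 0 < γ → Jr γ z = z := by
    intro γ hγ
    have h := hA (Jr γ z) z (γ⁻¹ • (z - Jr γ z)) 0 (hJ γ hγ z) hz γ hγ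
    have e : Jr γ z - z + γ • (γ⁻¹ • (z - Jr γ z) - 0) = 0 := by
      rw [sub_zero, smul_smul, mul_inv_cancel₀ hγ.ne', one_smul]; abel
    rw [e, norm_zero] at h
    exact sub_eq_zero.mp (norm_eq_zero.mp (le_antisymm h (norm_nonneg _)))
  -- resolvents are nonexpansive
  have hne : ∀ γ : ℝ, 0 < γ → ∀ p q : X, ‖Jr γ p - Jr γ q‖ ≤ ‖p - q‖ := by
    intro γ hγ p q
    have h := hA (Jr γ p) (Jr γ q) _ _ (hJ γ hγ p) (hJ γ hγ q) γ hγ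
    have e : Jr γ p - Jr γ q + γ • (γ⁻¹ • (p - Jr γ p) - γ⁻¹ • (q - Jr γ q)) = p - q := by
      rw [← smul_sub, smul_smul, mul_inv_cancel₀ hγ.ne', one_smul]; abel
    rwa [e] at h
  -- resolvent identity
  have hres : ∀ γ l : ℝ, 0 < γ → 0 < l → ∀ p : X,
      ‖Jr γ p - Jr l p‖ ≤ |1 - γ / l| * ‖Jr l p - p‖ := by
    intro γ l hγ hl p
    have h := hA (Jr γ p) (Jr l p) _ _ (hJ γ hγ p) (hJ l hl p) γ hγ
    have e : Jr γ p - Jr l p + γ • (γ⁻¹ • (p - Jr γ p) - l⁻¹ • (p - Jr l p))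
        = (1 - γ / l) • (p - Jr l p) := by
      rw [smul_sub, smul_smul, smul_smul, mul_inv_cancel₀ hγ.ne', one_smul,
        ← div_eq_mul_inv, sub_smul, one_smul]
      abel
    rw [e, norm_smul, Real.norm_eq_abs] at h
    exact h.trans (le_of_eq (by rw [norm_sub_rev]))
  have hxz : ‖x - z‖ ≤ (Kz:ℝ) := le_trans (le_max_left _ _) hKz
  have hfz : ‖f z - z‖ ≤ (1 - α) * Kz := by
    have h := le_trans (le_max_right _ _) hKz
    rw [div_le_iff₀ hα'] at h; linarith
  -- boundedness of the iteration
  have hbd : ∀ n, ‖xs n - z‖ ≤ (Kz:ℝ) := by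
    intro n; induction n with
    | zero => rw [hxs0]; exact hxz
    | succ n ih =>
      have ha0 := (ha n).1; have ha1 := (ha n).2
      have hf1 : ‖f (xs n) - z‖ ≤ (Kz:ℝ) := by
        have t : f (xs n) - z = (f (xs n) - f z) + (f z - z) := by abel
        rw [t]
        calc ‖f (xs n) - f z + (f z - z)‖ ≤ ‖f (xs n) - f z‖ + ‖f z - z‖ := norm_add_le _ _
          _ ≤ α * Kz + (1 - α) * Kz := by
              refine add_le_add (le_trans (hf _ _) ?_) hfz
              exact mul_le_mul_of_nonneg_left ih hα0
          _ = Kz := by ring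
      have hJ1 : ‖Jr (lam n) (xs n) - z‖ ≤ (Kz:ℝ) := by
        have h := hne (lam n) (hlam n) (xs n) z
        rw [hJz (lam n) (hlam n)] at h
        exact h.trans ih
      rw [hxs n]
      have e : a n • f (xs n) + (1 - a n) • Jr (lam n) (xs n) - z
          = a n • (f (xs n) - z) + (1 - a n) • (Jr (lam n) (xs n) - z) := by
        rw [smul_sub, smul_sub, sub_smul, sub_smul, one_smul, one_smul]; abel
      rw [e]
      calc ‖a n • (f (xs n) - z) + (1 - a n) • (Jr (lam n) (xs n) - z)‖
          ≤ ‖a n • (f (xs n) - z)‖ + ‖(1 - a n) • (Jr (lam n) (xs n) - z)‖ := norm_add_le _ _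
        _ ≤ a n * Kz + (1 - a n) * Kz := by
            rw [norm_smul, norm_smul, Real.norm_eq_abs, Real.norm_eq_abs,
              abs_of_nonneg ha0, abs_of_nonneg (by linarith : (0:ℝ) ≤ 1 - a n)]
            exact add_le_add (mul_le_mul_of_nonneg_left hf1 ha0)
              (mul_le_mul_of_nonneg_left hJ1 (by linarith))
        _ = Kz := by ring
  have hfbd : ∀ n, ‖f (xs n) - z‖ ≤ (Kz:ℝ) := by
    intro n
    have t : f (xs n) - z = (f (xs n) - f z) + (f z - z) := by abel
    rw [t]
    calc ‖f (xs n) - f z + (f z - z)‖ ≤ ‖f (xs n) - f z‖ + ‖f z - z‖ := norm_add_le _ _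
      _ ≤ α * Kz + (1 - α) * Kz := by
          refine add_le_add (le_trans (hf _ _) ?_) hfz
          exact mul_le_mul_of_nonneg_left (hbd n) hα0
      _ = Kz := by ring
  have hJbd : ∀ n, ‖Jr (lam n) (xs n) - z‖ ≤ (Kz:ℝ) := by
    intro n
    have h := hne (lam n) (hlam n) (xs n) z
    rw [hJz (lam n) (hlam n)] at h
    exact h.trans (hbd n)
  have h2K : ∀ n, ‖Jr (lam n) (xs n) - f (xs n)‖ ≤ 2 * Kz := by
    intro n
    have t : Jr (lam n) (xs n) - f (xs n)
        = (Jr (lam n) (xs n) - z) - (f (xs n) - z) := by abel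
    rw [t]
    calc ‖(Jr (lam n) (xs n) - z) - (f (xs n) - z)‖
        ≤ ‖Jr (lam n) (xs n) - z‖ + ‖f (xs n) - z‖ := norm_sub_le _ _
      _ ≤ Kz + Kz := add_le_add (hJbd n) (hfbd n)
      _ = 2 * Kz := by ring
  -- Part 1
  have part1 : ∀ k : ℕ, ∀ n, Ψ k ≤ n → ‖Jr (lam n) (xs n) - xs n‖ ≤ 1 / (k + 1) := by
    intro k n hn
    rw [hΨdef k] at hn
    have h1 : (1:ℕ) ≤ 4 * Kz * (k + 1) :=
      Nat.one_le_iff_ne_zero.mpr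
        (Nat.mul_ne_zero (Nat.mul_ne_zero (by norm_num) (Nat.one_le_iff_ne_zero.mp hKz1))
          (Nat.succ_ne_zero k))
    have hσ := hσ₃ (4 * Kz * (k + 1) - 1) n (le_trans (le_max_left _ _) hn)
    have e1 : ((4 * Kz * (k + 1) - 1 : ℕ) : ℝ) + 1 = 4 * Kz * ((k:ℝ) + 1) := by
      rw [Nat.cast_sub h1]; push_cast; ring
    rw [e1] at hσ
    have hΦ' := hΦ (2 * k + 1) n (le_trans (le_max_right _ _) hn)
    have e2 : ((2 * k + 1 : ℕ) : ℝ) + 1 = 2 * ((k:ℝ) + 1) := by push_cast; ring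
    rw [e2] at hΦ'
    have ha0 := (ha n).1
    have eid : Jr (lam n) (xs n) - xs n
        = (xs (n + 1) - xs n) + a n • (Jr (lam n) (xs n) - f (xs n)) := by
      rw [hxs n, smul_sub, sub_smul, one_smul]; abel
    have hk : (0:ℝ) < (k:ℝ) + 1 := by positivity
    have hsm : ‖a n • (Jr (lam n) (xs n) - f (xs n))‖ ≤ 1 / (2 * ((k:ℝ) + 1)) := by
      rw [norm_smul, Real.norm_eq_abs, abs_of_nonneg ha0]
      calc a n * ‖Jr (lam n) (xs n) - f (xs n)‖
          ≤ (1 / (4 * Kz * ((k:ℝ) + 1))) * (2 * Kz) := by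
            exact mul_le_mul hσ (h2K n) (norm_nonneg _) (by positivity)
        _ = 1 / (2 * ((k:ℝ) + 1)) := by
            rw [div_mul_eq_mul_div, div_eq_div_iff (by positivity) (by positivity)]; ring
    calc ‖Jr (lam n) (xs n) - xs n‖
        ≤ ‖xs (n + 1) - xs n‖ + ‖a n • (Jr (lam n) (xs n) - f (xs n))‖ := by
          rw [eid]; exact norm_add_le _ _
      _ ≤ 1 / (2 * ((k:ℝ) + 1)) + 1 / (2 * ((k:ℝ) + 1)) := add_le_add hΦ' hsm
      _ = 1 / ((k:ℝ) + 1) := by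
        rw [← add_div, div_eq_div_iff (by positivity) (by positivity)]; ring
  refine ⟨part1, ?_⟩
  -- Part 2
  intro Λ hΛ NΛ hNΛ m Λm hΛm hlm_ Θ hΘdef k n hn
  rw [hΘdef k] at hn
  have hnN : NΛ ≤ n := le_trans (le_trans (le_max_left _ _) (le_max_left _ _)) hn
  have hn1 : Ψ (Λm * Λ * (k + 1) - 1) ≤ n :=
    le_trans (le_trans (le_max_right _ _) (le_max_left _ _)) hn
  have hn2 : Ψ (2 * k + 1) ≤ n := le_trans (le_max_right _ _) hn
  have hΛR : (1:ℝ) ≤ (Λ:ℝ) := by exact_mod_cast hΛ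
  have hΛmR : (1:ℝ) ≤ (Λm:ℝ) := by exact_mod_cast hΛm
  have hLL1 : (1:ℕ) ≤ Λm * Λ * (k + 1) :=
    Nat.one_le_iff_ne_zero.mpr
      (Nat.mul_ne_zero (Nat.mul_ne_zero (Nat.one_le_iff_ne_zero.mp hΛm)
        (Nat.one_le_iff_ne_zero.mp hΛ)) (Nat.succ_ne_zero k))
  have hk : (0:ℝ) < (k:ℝ) + 1 := by positivity
  have hs1 : ‖Jr (lam n) (xs n) - xs n‖ ≤ 1 / ((Λm:ℝ) * Λ * ((k:ℝ) + 1)) := by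
    have h := part1 (Λm * Λ * (k + 1) - 1) n hn1
    have e : ((Λm * Λ * (k + 1) - 1 : ℕ) : ℝ) + 1 = (Λm:ℝ) * Λ * ((k:ℝ) + 1) := by
      rw [Nat.cast_sub hLL1]; push_cast; ring
    rwa [e] at h
  have hs2 : ‖Jr (lam n) (xs n) - xs n‖ ≤ 1 / (2 * ((k:ℝ) + 1)) := by
    have h := part1 (2 * k + 1) n hn2
    have e : ((2 * k + 1 : ℕ) : ℝ) + 1 = 2 * ((k:ℝ) + 1) := by push_cast; ring
    rwa [e] at h
  have hln_ := hNΛ n hnN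
  have hlamn := hlam n
  have hlamm := hlam m
  have snn : (0:ℝ) ≤ ‖Jr (lam n) (xs n) - xs n‖ := norm_nonneg _
  have tri : ‖Jr (lam m) (xs n) - xs n‖
      ≤ |1 - lam m / lam n| * ‖Jr (lam n) (xs n) - xs n‖ + ‖Jr (lam n) (xs n) - xs n‖ := by
    have t : Jr (lam m) (xs n) - xs n
        = (Jr (lam m) (xs n) - Jr (lam n) (xs n)) + (Jr (lam n) (xs n) - xs n) := by abel
    rw [t]
    exact le_trans (norm_add_le _ _) (add_le_add_left (hres (lam m) (lam n) hlamm hlamn _) _)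
  rcases le_or_gt (lam m) (lam n) with hc | hc
  · have hr : |1 - lam m / lam n| ≤ 1 := by
      rw [abs_le]
      constructor
      · have : lam m / lam n ≤ 1 := (div_le_one hlamn).mpr hc
        linarith
      · have : 0 ≤ lam m / lam n := by positivity
        linarith
    have h1 : |1 - lam m / lam n| * ‖Jr (lam n) (xs n) - xs n‖ ≤ ‖Jr (lam n) (xs n) - xs n‖ := by
      nlinarith
    have e : 1 / (2 * ((k:ℝ) + 1)) + 1 / (2 * ((k:ℝ) + 1)) = 1 / ((k:ℝ) + 1) := by
      rw [← add_div, div_eq_div_iff (by positivity) (by positivity)]; ring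
    linarith
  · have hr : |1 - lam m / lam n| = lam m / lam n - 1 := by
      have : (1:ℝ) ≤ lam m / lam n := (one_le_div hlamn).mpr hc.le
      rw [abs_of_nonpos (by linarith)]; ring
    have hLLpos : (0:ℝ) < (Λm:ℝ) * Λ := by nlinarith
    have hrle : lam m / lam n ≤ (Λm:ℝ) * Λ := by
      rw [div_le_iff₀ hlamn]
      have h1 : (1:ℝ) / Λ ≤ lam n := hln_
      have hΛpos : (0:ℝ) < (Λ:ℝ) := by linarith
      have h2 : (Λm:ℝ) * Λ * (1 / Λ) ≤ (Λm:ℝ) * Λ * lam n :=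
        mul_le_mul_of_nonneg_left h1 hLLpos.le
      have h3 : (Λm:ℝ) * Λ * (1 / Λ) = (Λm:ℝ) := by field_simp
      calc lam m ≤ (Λm:ℝ) := hlm_
        _ = (Λm:ℝ) * Λ * (1 / Λ) := h3.symm
        _ ≤ (Λm:ℝ) * Λ * lam n := h2
    have h1 : |1 - lam m / lam n| * ‖Jr (lam n) (xs n) - xs n‖ + ‖Jr (lam n) (xs n) - xs n‖
        = (lam m / lam n) * ‖Jr (lam n) (xs n) - xs n‖ := by
      rw [hr]; ring
    have h2 : (lam m / lam n) * ‖Jr (lam n) (xs n) - xs n‖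
        ≤ ((Λm:ℝ) * Λ) * (1 / ((Λm:ℝ) * Λ * ((k:ℝ) + 1))) := by
      refine mul_le_mul hrle hs1 snn hLLpos.le
    have h3 : ((Λm:ℝ) * Λ) * (1 / ((Λm:ℝ) * Λ * ((k:ℝ) + 1))) = 1 / ((k:ℝ) + 1) := by
      rw [mul_one_div, div_eq_div_iff (mul_pos hLLpos hk).ne' hk.ne']; ring
    linarith [tri, h1, h2, h3]
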